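/- Let b > 1, let k ≥ 2 and let 𝕒 ∈ 𝒟_A^{k−1}. Then the following are equivalent: (1) u_{𝕒,d} = 𝕒(b) + (d+1)b^{−k} (equivalently, the cylinder Δ(𝕒d) is an interval of length b^{−k}); (2) 𝕒 ∉ E_{k−1,d}. -/

import Mathlib

/-- The beta transformation `T x = b x - ⌊b x⌋`. -/
noncomputable def bT (b : ℝ) (x : ℝ) : ℝ := b * x - ⌊b * x⌋

/-- `bdig b j x` is the `(j+1)`-th digit `d_{j+1}(x) = ⌊b · T^[j] x⌋` of the `b`-expansion. -/
noncomputable def bdig (b : ℝ) (j : ℕ) (x : ℝ) : ℤ := ⌊b * (bT b)^[j] x⌋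

/-- A block `a_0 ⋯ a_{n-1}` (0-indexed) is admissible if it consists of the
first `n` digits of the `b`-expansion of some `x ∈ [0,1)`. -/
def bAdm (b : ℝ) (n : ℕ) (a : ℕ → ℤ) : Prop :=
  ∃ x ∈ Set.Ico (0 : ℝ) 1, ∀ j < n, a j = bdig b j x

/-- The value `𝕒(b) = Σ_{k=1}^n a_k b^{-k}` of a block. -/
noncomputable def blockVal (b : ℝ) (n : ℕ) (a : ℕ → ℤ) : ℝ :=
  ∑ j ∈ Finset.range n, (a j : ℝ) * b ^ (-((j : ℤ) + 1))

/-- `a ∈ E_{k-1,d}`: `a` is an admissible `(k-1)`-block and for some `j < k`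
(1-indexed), the value of the block `a_j ⋯ a_{k-1} (d+1)` exceeds 1.
Here `a` is 0-indexed, so the suffix starts at a 0-indexed position `j < k-1`. -/
def memE (b : ℝ) (k : ℕ) (d : ℤ) (a : ℕ → ℤ) : Prop :=
  bAdm b (k - 1) a ∧ ∃ j < k - 1,
    1 < (∑ m ∈ Finset.range (k - 1 - j), (a (j + m) : ℝ) * b ^ (-((m : ℤ) + 1)))
        + (d + 1 : ℝ) * b ^ (-((k - 1 - j : ℕ) : ℤ) - 1)

/-- The cylinder `Δ(𝕒d)`: elements of `[0,1)` whose first `k-1` digits are given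
by `a` and whose `k`-th digit is `d`. -/
def cylinder (b : ℝ) (k : ℕ) (d : ℤ) (a : ℕ → ℤ) : Set ℝ :=
  {x | x ∈ Set.Ico (0 : ℝ) 1 ∧ (∀ j < k - 1, bdig b j x = a j) ∧ bdig b (k - 1) x = d}

lemma zp (b : ℝ) (m : ℕ) : b ^ (-((m:ℤ)+1)) = (b ^ (m+1))⁻¹ := by
  rw [show -((m:ℤ)+1) = -((m+1 : ℕ) : ℤ) by push_cast; ring, zpow_neg, zpow_natCast]

lemma bT_mem (b x : ℝ) : 0 ≤ bT b x ∧ bT b x < 1 := by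
  unfold bT
  constructor
  · have := Int.floor_le (b*x); linarith
  · have := Int.lt_floor_add_one (b*x); push_cast; linarith

lemma iter_mem (b : ℝ) {x : ℝ} (hx : 0 ≤ x ∧ x < 1) (j : ℕ) :
    0 ≤ (bT b)^[j] x ∧ (bT b)^[j] x < 1 := by
  cases j with
  | zero => simpa using hx
  | succ n => rw [Function.iterate_succ_apply']; exact bT_mem b _

lemma blockVal_succ (b : ℝ) (w : ℕ → ℤ) (n : ℕ) :
    blockVal b (n+1) w = blockVal b n w + (w n : ℝ) * (b ^ (n+1))⁻¹ := by
  rw [blockVal, blockVal, Finset.sum_range_succ, zp]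

lemma blockVal_nonneg {b : ℝ} (hb : 0 < b) {w : ℕ → ℤ} (hw : ∀ j, 0 ≤ w j) (n : ℕ) :
    0 ≤ blockVal b n w :=
  Finset.sum_nonneg fun j _ => mul_nonneg (by exact_mod_cast hw j) (zpow_nonneg hb.le _)

lemma blockVal_mono {b : ℝ} (hb : 0 < b) {w : ℕ → ℤ} (hw : ∀ j, 0 ≤ w j) {m n : ℕ} (h : m ≤ n) :
    blockVal b m w ≤ blockVal b n w :=
  Finset.sum_le_sum_of_subset_of_nonneg (Finset.range_subset_range.mpr h)
    (fun j _ _ => mul_nonneg (by exact_mod_cast hw j) (zpow_nonneg hb.le _))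

lemma iter_eq {b : ℝ} (hb : 1 < b) (w : ℕ → ℤ) (x : ℝ) (n : ℕ)
    (h : ∀ j < n, bdig b j x = w j) :
    (bT b)^[n] x = b ^ n * (x - blockVal b n w) := by
  induction n with
  | zero => simp [blockVal]
  | succ n ih =>
    have hdn : ∀ j < n, bdig b j x = w j := fun j hj => h j (by omega)
    have hit := ih hdn
    have hfl : ⌊b * (bT b)^[n] x⌋ = w n := h n (by omega)
    rw [Function.iterate_succ_apply',
      show bT b ((bT b)^[n] x) = b * (bT b)^[n] x - (⌊b * (bT b)^[n] x⌋ : ℝ) from rfl,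
      hfl, hit, blockVal_succ]
    have hBne : (b ^ (n+1) : ℝ) ≠ 0 := by positivity
    field_simp
    ring

lemma dig_step {b : ℝ} (hb : 1 < b) (w : ℕ → ℤ) {x : ℝ} (n : ℕ)
    (h : ∀ j < n, bdig b j x = w j) :
    bdig b n x = w n ↔
      (blockVal b (n+1) w ≤ x ∧ x < blockVal b (n+1) w + (b ^ (n+1))⁻¹) := by
  have hb0 : (0:ℝ) < b := by linarith
  have hB : (0:ℝ) < b ^ (n+1) := by positivity
  have hit := iter_eq hb w x n h
  rw [bdig, hit, show b * (b ^ n * (x - blockVal b n w)) = (x - blockVal b n w) * b^(n+1) by ring,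
    Int.floor_eq_iff, blockVal_succ]
  have e1 : (w n : ℝ) * (b^(n+1))⁻¹ = (w n:ℝ)/b^(n+1) := (div_eq_mul_inv _ _).symm
  have e2 : ((w n:ℝ)+1)/b^(n+1) = (w n:ℝ) * (b^(n+1))⁻¹ + (b^(n+1))⁻¹ := by
    field_simp
  constructor
  · rintro ⟨h1, h2⟩
    have h1' : (w n : ℝ) / b^(n+1) ≤ x - blockVal b n w := (div_le_iff₀ hB).mpr h1
    have h2' : x - blockVal b n w < ((w n : ℝ)+1) / b^(n+1) := (lt_div_iff₀ hB).mpr h2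
    constructor
    · linarith
    · linarith
  · rintro ⟨h1, h2⟩
    constructor
    · have : (w n:ℝ)/b^(n+1) ≤ x - blockVal b n w := by linarith
      exact (div_le_iff₀ hB).mp this
    · have : x - blockVal b n w < ((w n:ℝ)+1)/b^(n+1) := by linarith
      exact (lt_div_iff₀ hB).mp this

lemma dig_iff {b : ℝ} (hb : 1 < b) (w : ℕ → ℤ) {x : ℝ} (n : ℕ) :
    (∀ j < n, bdig b j x = w j) ↔
      ∀ m < n, blockVal b (m+1) w ≤ x ∧ x < blockVal b (m+1) w + (b ^ (m+1))⁻¹ := by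
  induction n with
  | zero => simp
  | succ n ih =>
    constructor
    · intro h m hm
      rcases Nat.lt_succ_iff_lt_or_eq.mp hm with hm' | rfl
      · exact ih.mp (fun j hj => h j (by omega)) m hm'
      · exact (dig_step hb w m (fun j hj => h j (by omega))).mp (h m (by omega))
    · intro h j hj
      rcases Nat.lt_succ_iff_lt_or_eq.mp hj with hj' | rfl
      · exact ih.mpr (fun m hm => h m (by omega)) j hj'
      · exact (dig_step hb w j (ih.mpr (fun m hm => h m (by omega)))).mpr (h j (by omega))

lemma shift {b : ℝ} (hb : 1 < b) (w : ℕ → ℤ) {j n : ℕ} (h : j ≤ n) :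
    ∑ m ∈ Finset.range (n - j), (w (j+m) : ℝ) * b ^ (-((m:ℤ)+1)) =
      b ^ j * (blockVal b n w - blockVal b j w) := by
  have hb0 : (0:ℝ) < b := by linarith
  rw [blockVal, blockVal, ← Finset.sum_Ico_eq_sub _ h, Finset.sum_Ico_eq_sum_range, Finset.mul_sum]
  apply Finset.sum_congr rfl
  intro m _
  rw [zp b m, zp b (j+m)]
  have h1 : (b:ℝ)^(j+m+1) = b^j * b^(m+1) := by ring
  rw [h1]
  have h2 : (b:ℝ)^j ≠ 0 := by positivity
  have h3 : (b:ℝ)^(m+1) ≠ 0 := by positivity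
  field_simp

lemma dprime_le {b : ℝ} (hb : 1 < b) (c : ℕ → ℤ)
    (hc : ∀ j, ∀ᶠ ε in nhdsWithin (0 : ℝ) (Set.Ioi 0), bdig b j (1 - ε) = c j)
    (d' : ℤ) (hd' : ∀ j, d' ≤ c j) : (d' : ℝ) ≤ b - 1 := by
  have hb0 : (0:ℝ) < b := by linarith
  by_contra hcon
  push_neg at hcon
  have hd'0 : (0:ℝ) < (d':ℝ) := by linarith
  set r : ℝ := b⁻¹ with hr
  have hr0 : (0:ℝ) ≤ r := by positivity
  have hr1 : r < 1 := by rw [hr]; exact inv_lt_one_of_one_lt₀ hb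
  have hkey : ∀ n : ℕ, (d':ℝ) * ∑ j ∈ Finset.range (n+1), r^(j+1) ≤ 1 := by
    intro n
    have hev1 : ∀ᶠ ε in nhdsWithin (0:ℝ) (Set.Ioi 0),
        ∀ j ∈ Finset.range (n+1), bdig b j (1-ε) = c j :=
      (Filter.eventually_all_finset _).mpr (fun j _ => hc j)
    have hmem : Set.Ioo (0:ℝ) 1 ∈ nhdsWithin (0:ℝ) (Set.Ioi 0) :=
      Ioo_mem_nhdsGT_of_mem ⟨le_refl 0, one_pos⟩
    obtain ⟨ε, hdig, hε⟩ :=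
      (hev1.and (Filter.eventually_of_mem hmem (fun x hx => hx))).exists
    have hdig' : ∀ j < n+1, bdig b j (1-ε) = c j :=
      fun j hj => hdig j (Finset.mem_range.mpr hj)
    have hint := (dig_iff hb c (n+1)).mp hdig' n (by omega)
    have hx1 : 1 - ε < 1 := by linarith [hε.1]
    have e : ∀ j : ℕ, (b:ℝ) ^ (-((j:ℤ)+1)) = r^(j+1) := fun j => by
      rw [zp, hr, inv_pow]
    have hlow : (d':ℝ) * ∑ j ∈ Finset.range (n+1), r^(j+1) ≤ blockVal b (n+1) c := by
      rw [blockVal, Finset.mul_sum]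
      apply Finset.sum_le_sum
      intro j _
      rw [e j]
      exact mul_le_mul_of_nonneg_right (by exact_mod_cast hd' j) (by positivity)
    linarith [hint.1]
  have hgeo : HasSum (fun i : ℕ => r^i) (1 - r)⁻¹ := hasSum_geometric_of_lt_one hr0 hr1
  have htend : Filter.Tendsto (fun n => ∑ i ∈ Finset.range n, r^i)
      Filter.atTop (nhds (1-r)⁻¹) := hgeo.tendsto_sum_nat
  have h1 : ∀ n : ℕ, ∑ j ∈ Finset.range n, r^(j+1) = (∑ i ∈ Finset.range n, r^i) * r := by
    intro n; rw [Finset.sum_mul]; exact Finset.sum_congr rfl (fun j _ => (pow_succ r j).symm)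
  have htend2 : Filter.Tendsto (fun n => (d':ℝ) * ∑ j ∈ Finset.range (n+1), r^(j+1))
      Filter.atTop (nhds ((d':ℝ) * ((1-r)⁻¹ * r))) := by
    have := ((htend.mul_const r).const_mul (d':ℝ)).comp (Filter.tendsto_add_atTop_nat 1)
    simpa [Function.comp_def, h1] using this
  have hle := le_of_tendsto' htend2 hkey
  have hfin : ((1:ℝ)-r)⁻¹ * r = (b-1)⁻¹ := by
    have hbne : b ≠ 0 := by linarith
    have hb1 : b - 1 ≠ 0 := by linarith
    rw [hr, show (1:ℝ) - b⁻¹ = (b-1)/b by field_simp, inv_div]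
    field_simp
  rw [hfin] at hle
  have hb1 : (0:ℝ) < b - 1 := by linarith
  have h2 := mul_le_mul_of_nonneg_right hle hb1.le
  rw [mul_assoc, inv_mul_cancel₀ (ne_of_gt hb1), mul_one, one_mul] at h2
  linarith


/-- `u_{𝕒,d} = 𝕒(b) + (d+1) b^{-k}` (equivalently, `Δ(𝕒d)` has length `b^{-k}`)
if and only if `𝕒 ∉ E_{k-1,d}`. -/
theorem stmt1 (b : ℝ) (hb : 1 < b) (k : ℕ) (hk : 2 ≤ k)
    (c : ℕ → ℤ)
    (hc : ∀ j, ∀ᶠ ε in nhdsWithin (0 : ℝ) (Set.Ioi 0), bdig b j (1 - ε) = c j)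
    (d' : ℤ) (hd' : IsLeast {z : ℤ | ∃ j, c j = z} d')
    (d : ℤ) (hd0 : 0 ≤ d) (hdd' : d ≤ d')
    (a : ℕ → ℤ) (ha : bAdm b (k - 1) a) :
    sSup (cylinder b k d a) = blockVal b (k - 1) a + (d + 1 : ℝ) * b ^ (-(k : ℤ))
      ↔ ¬ memE b k d a := by
  classical
  have hb0 : (0:ℝ) < b := by linarith
  set w : ℕ → ℤ := fun j => if j < k - 1 then a j else d with hw
  have hwlt : ∀ j, j < k - 1 → w j = a j := by
    intro j hj; simp only [hw]; rw [if_pos hj]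
  have hwk : w (k-1) = d := by simp only [hw]; rw [if_neg (lt_irrefl _)]
  have hwnn : ∀ j, 0 ≤ w j := by
    intro j
    by_cases hj : j < k - 1
    · rw [hwlt j hj]
      obtain ⟨x₀, hx₀, hax⟩ := ha
      rw [hax j hj]
      exact Int.floor_nonneg.mpr (mul_nonneg hb0.le (iter_mem b ⟨hx₀.1, hx₀.2⟩ j).1)
    · simp only [hw]; rw [if_neg hj]; exact hd0
  have hd'b : (d':ℝ) ≤ b - 1 := dprime_le hb c hc d' (fun j => hd'.2 ⟨j, rfl⟩)
  have hdb : (d:ℝ) + 1 ≤ b := by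
    have : (d:ℝ) ≤ (d':ℝ) := by exact_mod_cast hdd'
    linarith
  have hbv0 : blockVal b 0 w = 0 := by simp [blockVal]
  have hbk : blockVal b k w = blockVal b (k-1) a + (d:ℝ) * (b^k)⁻¹ := by
    have h3 := blockVal_succ b w (k-1)
    rw [show k-1+1 = k from by omega] at h3
    rw [h3, hwk]
    congr 1
    exact Finset.sum_congr rfl (fun j hj => by rw [hwlt j (Finset.mem_range.mp hj)])
  have hF1 : blockVal b (k-1) a + (d + 1 : ℝ) * b ^ (-(k:ℤ)) = blockVal b k w + (b^k)⁻¹ := by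
    rw [hbk, zpow_neg, zpow_natCast]
    ring
  have hmul : ∀ (B t : ℝ), 0 < B → (1 < B * t ↔ B⁻¹ < t) := by
    intro B t hB
    constructor
    · intro h
      by_contra hle
      push_neg at hle
      have h2 := mul_le_mul_of_nonneg_left hle hB.le
      rw [mul_inv_cancel₀ (ne_of_gt hB)] at h2
      linarith
    · intro h
      have h2 := mul_lt_mul_of_pos_left h hB
      rw [mul_inv_cancel₀ (ne_of_gt hB)] at h2
      linarith
  have hexpr : ∀ j, j < k - 1 →
      (∑ m ∈ Finset.range (k - 1 - j), (a (j + m) : ℝ) * b ^ (-((m : ℤ) + 1)))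
        + (d + 1 : ℝ) * b ^ (-((k - 1 - j : ℕ) : ℤ) - 1)
      = b ^ j * (blockVal b k w + (b^k)⁻¹ - blockVal b j w) := by
    intro j hj
    have hsh := shift hb w (show j ≤ k by omega)
    rw [show k - j = (k-1-j) + 1 from by omega, Finset.sum_range_succ,
      show j + (k-1-j) = k-1 from by omega, hwk, zp b (k-1-j),
      show k-1-j+1 = k-j from by omega] at hsh
    have hsum : ∑ m ∈ Finset.range (k-1-j), ((w (j+m) : ℝ) * b ^ (-((m:ℤ)+1)))
        = ∑ m ∈ Finset.range (k-1-j), ((a (j+m) : ℝ) * b ^ (-((m:ℤ)+1))) :=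
      Finset.sum_congr rfl (fun m hm => by
        rw [hwlt (j+m) (by have := Finset.mem_range.mp hm; omega)])
    rw [hsum] at hsh
    have hI2 : ((b:ℝ)^(k-j))⁻¹ = b^j * (b^k)⁻¹ := by
      have hbk2 : (b:ℝ)^k = b^j * b^(k-j) := by rw [← pow_add]; congr 1; omega
      rw [hbk2, mul_inv, ← mul_assoc, mul_inv_cancel₀ (by positivity : (b:ℝ)^j ≠ 0), one_mul]
    rw [show (-(((k-1-j:ℕ)):ℤ) - 1) = -((((k-1-j:ℕ)):ℤ) + 1) from by ring, zp b (k-1-j),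
      show k-1-j+1 = k-j from by omega]
    linear_combination hsh + hI2
  have hE : memE b k d a ↔
      ∃ j < k - 1, 1 < b ^ j * (blockVal b k w + (b^k)⁻¹ - blockVal b j w) := by
    constructor
    · rintro ⟨-, j, hj, hgt⟩
      exact ⟨j, hj, by rw [← hexpr j hj]; exact hgt⟩
    · rintro ⟨j, hj, hgt⟩
      exact ⟨ha, j, hj, by rw [hexpr j hj]; exact hgt⟩
  have hcyl : cylinder b k d a =
      {x : ℝ | (0 ≤ x ∧ x < 1) ∧
        ∀ m < k, blockVal b (m+1) w ≤ x ∧ x < blockVal b (m+1) w + (b ^ (m+1))⁻¹} := by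
    ext x
    simp only [cylinder, Set.mem_Ico, Set.mem_setOf_eq]
    constructor
    · rintro ⟨hx, h1, h2⟩
      refine ⟨hx, (dig_iff hb w k).mp ?_⟩
      intro j hj
      by_cases hj' : j < k - 1
      · rw [h1 j hj', hwlt j hj']
      · rw [show j = k-1 from by omega, h2, hwk]
    · rintro ⟨hx, h⟩
      have hd2 := (dig_iff hb w k).mpr h
      exact ⟨hx, fun j hj => by rw [hd2 j (by omega), hwlt j hj],
        by rw [hd2 (k-1) (by omega), hwk]⟩
  rw [hF1]
  constructor
  · intro hs hmem
    obtain ⟨j, hj, hgt⟩ := hE.mp hmem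
    have hBj : (0:ℝ) < b^j := by positivity
    have hlt : blockVal b j w + (b^j)⁻¹ < blockVal b k w + (b^k)⁻¹ := by
      have := (hmul _ _ hBj).mp hgt
      linarith
    have hub : ∀ x ∈ cylinder b k d a, x ≤ blockVal b j w + (b^j)⁻¹ := by
      intro x hxc
      rw [hcyl] at hxc
      obtain ⟨⟨hx0, hx1⟩, hint⟩ := hxc
      rcases Nat.eq_zero_or_pos j with rfl | hj0
      · rw [hbv0, pow_zero, inv_one]
        linarith
      · have h5 := hint (j-1) (by omega)
        rw [show j-1+1 = j from by omega] at h5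
        linarith [h5.2]
    have hle : sSup (cylinder b k d a) ≤ blockVal b j w + (b^j)⁻¹ :=
      Real.sSup_le hub (add_nonneg (blockVal_nonneg hb0 hwnn j) (by positivity))
    rw [hs] at hle
    linarith
  · intro hnot
    have hall : ∀ j, j < k - 1 →
        b ^ j * (blockVal b k w + (b^k)⁻¹ - blockVal b j w) ≤ 1 := by
      intro j hj
      by_contra hgt
      push_neg at hgt
      exact hnot (hE.mpr ⟨j, hj, hgt⟩)
    have hQle : ∀ j, j ≤ k →
        blockVal b k w + (b^k)⁻¹ ≤ blockVal b j w + (b^j)⁻¹ := by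
      intro j hj
      rcases lt_or_ge j (k-1) with hlt | hge
      · have h6 := hall j hlt
        have hBj : (0:ℝ) < b^j := by positivity
        have h7 : blockVal b k w + (b^k)⁻¹ - blockVal b j w ≤ (b^j)⁻¹ := by
          by_contra h8
          push_neg at h8
          exact absurd ((hmul _ _ hBj).mpr h8) (not_lt.mpr h6)
        linarith
      · have hcase : j = k - 1 ∨ j = k := by omega
        rcases hcase with rfl | rfl
        · have h3 := blockVal_succ b w (k-1)
          rw [show k-1+1 = k from by omega] at h3
          rw [h3, hwk]
          have hp : (b:ℝ)^k = b^(k-1) * b := by rw [← pow_succ]; congr 1; omega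
          have hfin : ((d:ℝ)+1) * (b^k)⁻¹ ≤ (b^(k-1))⁻¹ := by
            have e1 : ((d:ℝ)+1) * (b^k)⁻¹ = (((d:ℝ)+1) * b⁻¹) * (b^(k-1))⁻¹ := by
              rw [hp, mul_inv]; ring
            have e2 : ((d:ℝ)+1) * b⁻¹ ≤ 1 := by
              rw [← div_eq_mul_inv, div_le_one hb0]; exact hdb
            rw [e1]
            calc (((d:ℝ)+1) * b⁻¹) * (b^(k-1))⁻¹ ≤ 1 * (b^(k-1))⁻¹ :=
                  mul_le_mul_of_nonneg_right e2 (by positivity)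
              _ = (b^(k-1))⁻¹ := one_mul _
          linarith
        · linarith
    have hEq : cylinder b k d a = Set.Ico (blockVal b k w) (blockVal b k w + (b^k)⁻¹) := by
      rw [hcyl]
      ext x
      simp only [Set.mem_setOf_eq, Set.mem_Ico]
      constructor
      · rintro ⟨⟨hx0, hx1⟩, h⟩
        have h5 := h (k-1) (by omega)
        rw [show k-1+1 = k from by omega] at h5
        exact h5
      · rintro ⟨h1, h2⟩
        have hQ1 : blockVal b k w + (b^k)⁻¹ ≤ 1 := by
          have := hQle 0 (by omega)
          rw [hbv0, pow_zero, inv_one] at this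
          linarith
        refine ⟨⟨le_trans (blockVal_nonneg hb0 hwnn k) h1, lt_of_lt_of_le h2 hQ1⟩,
          fun m hm => ⟨le_trans (blockVal_mono hb0 hwnn (by omega : m+1 ≤ k)) h1,
            lt_of_lt_of_le h2 (hQle (m+1) (by omega))⟩⟩
    rw [hEq]
    exact csSup_Ico (lt_add_of_pos_right _ (by positivity))
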